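/- arXiv:1010.4864 — 4 statements merged into one kernel-verified Lean document; each statement's English description precedes it below -/
import Mathlib

section
/- For any integer m ≥ 2 and any x in the unit interval which is irrational, with aₙ(x) = a₁(T_m^{n−1}(x)) and pₙ, qₙ defined from (aₖ(x)) by the standard recursions, one has x = (pₙ + (m−1) T_m^n(x) m^{aₙ} p_{n−1}) / (qₙ + (m−1) T_m^n(x) m^{aₙ} q_{n−1}) for every n ≥ 1. -/
/-- The Chan shift transformation `T_m`. -/
noncomputable def chanT (m : ℕ) (x : ℝ) : ℝ :=
  if x = 0 then 0
  else ((m:ℝ) ^ (Int.fract (Real.log (1/x) / Real.log m)) - 1) / ((m:ℝ) - 1)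

/-- The first digit `a₁(x) = ⌊log(1/x)/log m⌋`. -/
noncomputable def chanA (m : ℕ) (x : ℝ) : ℤ := ⌊Real.log (1/x) / Real.log m⌋

lemma chan_key (m : ℕ) (hm : 2 ≤ m) {y : ℝ} (hy : y ∈ Set.Ioo (0:ℝ) 1)
    (hirr : Irrational y) :
    (m:ℝ) ^ (chanA m y) * (1 + ((m:ℝ)-1) * chanT m y) = 1 / y ∧
    chanT m y ∈ Set.Ioo (0:ℝ) 1 ∧ Irrational (chanT m y) := by
  obtain ⟨hy0, hy1⟩ := hy
  have hm1 : (1:ℝ) < m := by exact_mod_cast (by omega : 1 < m)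
  set L := Real.log (1/y) / Real.log m with hL
  have hmL : (m:ℝ) ^ L = 1/y := by
    have : L = Real.logb m (1/y) := rfl
    rw [this]
    exact Real.rpow_logb (by positivity) (by linarith) (by positivity)
  have haA : chanA m y = ⌊L⌋ := rfl
  have hfr : Int.fract L ≠ 0 := by
    intro h
    have hLe : L = (⌊L⌋ : ℝ) := by
      have := Int.fract L
      unfold Int.fract at h
      linarith [h]
    apply hirr
    refine ⟨(m:ℚ) ^ (-⌊L⌋), ?_⟩
    have h1y : 1/y = (m:ℝ) ^ (⌊L⌋ : ℤ) := by
      rw [← hmL, hLe, Real.rpow_intCast, Int.floor_intCast]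
    have hy' : y = (m:ℝ) ^ (-⌊L⌋) := by
      rw [zpow_neg, ← h1y, one_div, inv_inv]
    push_cast
    exact hy'.symm
  have hfr0 : 0 < Int.fract L := lt_of_le_of_ne (Int.fract_nonneg L) (Ne.symm hfr)
  have hfr1 : Int.fract L < 1 := Int.fract_lt_one L
  have hmz : ((m:ℝ) ^ (⌊L⌋:ℤ)) ≠ 0 := zpow_ne_zero _ (by positivity)
  have hmf : (m:ℝ) ^ (Int.fract L) = (1/y) * ((m:ℝ)^(⌊L⌋:ℤ))⁻¹ := by
    unfold Int.fract
    rw [Real.rpow_sub (by positivity), hmL, Real.rpow_intCast, div_eq_mul_inv]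
  have hT : chanT m y = ((m:ℝ)^(Int.fract L) - 1)/((m:ℝ)-1) := by
    rw [chanT, if_neg (ne_of_gt hy0)]
  have hm1' : (m:ℝ) - 1 ≠ 0 := by linarith
  have hstep : 1 + ((m:ℝ)-1) * chanT m y = (m:ℝ)^(Int.fract L) := by
    rw [hT]; field_simp; ring
  have key : (m:ℝ) ^ (chanA m y) * (1 + ((m:ℝ)-1) * chanT m y) = 1 / y := by
    rw [haA, hstep, hmf]
    field_simp
  have h1 : (1:ℝ) < (m:ℝ)^(Int.fract L) :=
    Real.one_lt_rpow_iff_of_pos (by positivity) |>.mpr (Or.inl ⟨hm1, hfr0⟩)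
  have h2 : (m:ℝ)^(Int.fract L) < m := by
    calc (m:ℝ)^(Int.fract L) < (m:ℝ)^(1:ℝ) :=
          Real.rpow_lt_rpow_of_exponent_lt hm1 hfr1
      _ = m := Real.rpow_one _
  have hT0 : 0 < chanT m y := by
    rw [hT]; apply div_pos <;> linarith
  have hT1 : chanT m y < 1 := by
    rw [hT, div_lt_one (by linarith)]; linarith
  refine ⟨key, ⟨hT0, hT1⟩, ?_⟩
  rintro ⟨r, hr⟩
  apply hirr
  refine ⟨((m:ℚ) ^ (chanA m y) * (1 + ((m:ℚ)-1) * r))⁻¹, ?_⟩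
  have h1y : (1:ℝ)/y = (m:ℝ)^(chanA m y) * (1 + ((m:ℝ)-1)*(r:ℝ)) := by
    rw [← key, hr]
  have hy' : y = ((m:ℝ)^(chanA m y) * (1 + ((m:ℝ)-1)*(r:ℝ)))⁻¹ := by
    rw [← h1y, one_div, inv_inv]
  push_cast
  exact hy'.symm

theorem chan_x_in_terms_of_convergents (m : ℕ) (hm : 2 ≤ m) (x : ℝ)
    (hx : x ∈ Set.Ioo (0:ℝ) 1) (hirr : Irrational x)
    (a : ℕ → ℤ) (ha0 : a 0 = 0)
    (ha : ∀ n, 1 ≤ n → a n = chanA m ((chanT m)^[n-1] x))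
    (p q : ℕ → ℝ) (hp0 : p 0 = 0) (hp1 : p 1 = 1) (hq0 : q 0 = 1)
    (hq1 : q 1 = (m:ℝ) ^ (a 1) * q 0)
    (hp : ∀ n, 2 ≤ n →
      p n = (m:ℝ) ^ (a n) * p (n-1) + ((m:ℝ) - 1) * (m:ℝ) ^ (a (n-1)) * p (n-2))
    (hq : ∀ n, 2 ≤ n →
      q n = (m:ℝ) ^ (a n) * q (n-1) + ((m:ℝ) - 1) * (m:ℝ) ^ (a (n-1)) * q (n-2)) :
    ∀ n, 1 ≤ n →
      x = (p n + ((m:ℝ) - 1) * ((chanT m)^[n] x) * (m:ℝ) ^ (a n) * p (n-1)) /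
            (q n + ((m:ℝ) - 1) * ((chanT m)^[n] x) * (m:ℝ) ^ (a n) * q (n-1)) := by
  have hiter : ∀ k, (chanT m)^[k] x ∈ Set.Ioo (0:ℝ) 1 ∧ Irrational ((chanT m)^[k] x) := by
    intro k
    induction k with
    | zero => exact ⟨hx, hirr⟩
    | succ k ih =>
      rw [Function.iterate_succ_apply']
      exact ⟨(chan_key m hm ih.1 ih.2).2.1, (chan_key m hm ih.1 ih.2).2.2⟩
  intro n hn
  induction n, hn using Nat.le_induction with
  | base =>
    have ha1 : a 1 = chanA m x := by simpa using ha 1 le_rfl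
    have key := (chan_key m hm hx hirr).1
    rw [← ha1] at key
    have hden : q 1 + ((m:ℝ) - 1) * ((chanT m)^[1] x) * (m:ℝ) ^ (a 1) * q 0 = 1/x := by
      rw [hq1, hq0, Function.iterate_one, ← key]; ring
    rw [hden, hp1, hp0, Function.iterate_one]
    rw [mul_zero, add_zero, one_div_one_div]
  | succ n hn ih =>
    set y := (chanT m)^[n] x with hy
    have hy01 := (hiter n).1
    have hy0 : y ≠ 0 := ne_of_gt hy01.1
    have ha' : a (n+1) = chanA m y := by
      have := ha (n+1) (by omega)
      simpa using this
    have key := (chan_key m hm hy01 (hiter n).2).1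
    rw [← ha'] at key
    set c := (m:ℝ) ^ (a (n+1)) * (1 + ((m:ℝ)-1) * chanT m y) with hcdef
    have hc : c ≠ 0 := by rw [key]; exact one_div_ne_zero hy0
    have hyc : y * c = 1 := by rw [key]; field_simp; exact div_self hy0
    have hpn1 := hp (n+1) (by omega)
    have hqn1 := hq (n+1) (by omega)
    have e1 : n + 1 - 1 = n := by omega
    have e2 : n + 1 - 2 = n - 1 := by omega
    rw [e1, e2] at hpn1 hqn1
    have hNp : p (n+1) + ((m:ℝ)-1) * chanT m y * (m:ℝ)^(a (n+1)) * p n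
        = c * (p n + ((m:ℝ)-1) * y * (m:ℝ)^(a n) * p (n-1)) := by
      rw [hpn1]
      linear_combination (-(p n)) * hcdef - ((m:ℝ)-1) * (m:ℝ)^(a n) * (p (n-1)) * hyc
    have hNq : q (n+1) + ((m:ℝ)-1) * chanT m y * (m:ℝ)^(a (n+1)) * q n
        = c * (q n + ((m:ℝ)-1) * y * (m:ℝ)^(a n) * q (n-1)) := by
      rw [hqn1]
      linear_combination (-(q n)) * hcdef - ((m:ℝ)-1) * (m:ℝ)^(a n) * (q (n-1)) * hyc
    rw [Function.iterate_succ_apply', ← hy, e1, hNp, hNq, mul_div_mul_left _ _ hc]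
    exact ih
end

section
/- For any integer m ≥ 2 and any interval (c,d) ⊆ (0,1), the extended measure γ̄_m satisfies γ̄_m of the image under T̄_m of (m^{−(i+1)}, m^{−i}) × (c,d) equals γ̄_m((m^{−(i+1)}, m^{−i}) × (c,d)), for every i ∈ ℕ; concretely, ∫₀¹ ∫_{m^{−i}/(1+(m−1)d)}^{m^{−i}/(1+(m−1)c)} dy dx/(1+(m−1)(x+y))² = ∫_{m^{−(i+1)}}^{m^{−i}} ∫_c^d dy dx/(1+(m−1)(x+y))². -/
set_option maxHeartbeats 1000000

open Real intervalIntegral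

lemma inner_int (k x a b : ℝ) (hk : 0 < k)
    (h : ∀ y ∈ Set.uIcc a b, 0 < 1 + k*(x+y)) :
    ∫ y in a..b, 1/(1+k*(x+y))^2
      = 1/(k*(1+k*(x+a))) - 1/(k*(1+k*(x+b))) := by
  have hderiv : ∀ y ∈ Set.uIcc a b,
      HasDerivAt (fun y => -(k*(1+k*(x+y)))⁻¹) (1/(1+k*(x+y))^2) y := by
    intro y hy
    have h1 : HasDerivAt (fun y : ℝ => k*(1+k*(x+y))) (k*k) y := by
      have h0 : HasDerivAt (fun y : ℝ => 1+k*(x+y)) k y := by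
        simpa using (((hasDerivAt_id y).const_add x).const_mul k).const_add 1
      simpa [mul_comm] using h0.const_mul k
    have hpos := h y hy
    have hne : k*(1+k*(x+y)) ≠ 0 := by positivity
    have := (h1.inv hne).neg
    refine this.congr_deriv ?_
    field_simp
  have hcont : IntervalIntegrable (fun y => 1/(1+k*(x+y))^2) MeasureTheory.volume a b := by
    apply ContinuousOn.intervalIntegrable
    apply ContinuousOn.div continuousOn_const
    · fun_prop
    · intro y hy
      have := h y hy
      positivity
  have := intervalIntegral.integral_eq_sub_of_hasDerivAt hderiv hcont
  rw [this]
  have ha := h a (Set.left_mem_uIcc)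
  have hb := h b (Set.right_mem_uIcc)
  field_simp
  ring

lemma log_int (k s a b : ℝ) (hk : 0 < k)
    (h : ∀ x ∈ Set.uIcc a b, 0 < 1 + k*(x+s)) :
    ∫ x in a..b, 1/(k*(1+k*(x+s)))
      = (Real.log (1+k*(b+s)) - Real.log (1+k*(a+s)))/k^2 := by
  have hderiv : ∀ x ∈ Set.uIcc a b,
      HasDerivAt (fun x => Real.log (1+k*(x+s))/k^2) (1/(k*(1+k*(x+s)))) x := by
    intro x hx
    have h0 : HasDerivAt (fun x : ℝ => 1+k*(x+s)) k x := by
      simpa using (((hasDerivAt_id x).add_const s).const_mul k).const_add 1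
    have hpos := h x hx
    have hne : 1+k*(x+s) ≠ 0 := ne_of_gt hpos
    have := (h0.log hne).div_const (k^2)
    refine this.congr_deriv ?_
    field_simp
  have hcont : IntervalIntegrable (fun x => 1/(k*(1+k*(x+s)))) MeasureTheory.volume a b := by
    apply ContinuousOn.intervalIntegrable
    apply ContinuousOn.div continuousOn_const
    · fun_prop
    · intro x hx
      have := h x hx
      positivity
  rw [intervalIntegral.integral_eq_sub_of_hasDerivAt hderiv hcont]
  ring

theorem chan_natural_extension_preserves (m : ℕ) (hm : 2 ≤ m) (i : ℕ)
    (c d : ℝ) (hc : 0 < c) (hcd : c < d) (hd : d < 1) :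
    (∫ x in (0:ℝ)..1, ∫ y in ((m:ℝ)^(-(i:ℤ)) / (1 + ((m:ℝ)-1)*d))..((m:ℝ)^(-(i:ℤ)) / (1 + ((m:ℝ)-1)*c)),
        1 / (1 + ((m:ℝ) - 1) * (x + y))^2) =
    ∫ x in ((m:ℝ)^(-((i:ℤ)+1)))..((m:ℝ)^(-(i:ℤ))), ∫ y in c..d,
        1 / (1 + ((m:ℝ) - 1) * (x + y))^2 := by
  have hm1 : (1:ℝ) < (m:ℝ) := by exact_mod_cast Nat.lt_of_lt_of_le one_lt_two hm
  set k : ℝ := (m:ℝ) - 1 with hk_def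
  have hk : 0 < k := by simp [hk_def]; linarith
  have hmpos : (0:ℝ) < m := by linarith
  set q : ℝ := (m:ℝ)^(-(i:ℤ)) with hq_def
  have hq : 0 < q := by rw [hq_def]; positivity
  set p : ℝ := (m:ℝ)^(-((i:ℤ)+1)) with hp_def
  have hpq : p = q / m := by
    rw [hp_def, hq_def, neg_add, zpow_add₀ (ne_of_gt hmpos)]
    simp [div_eq_mul_inv]
  have hp : 0 < p := by rw [hp_def]; positivity
  have hdc : 0 < 1 + k*c := by nlinarith [mul_pos hk hc]
  have hdd : 0 < 1 + k*d := by nlinarith [mul_pos hk (hc.trans hcd)]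
  set A : ℝ := q / (1 + k*d) with hA_def
  set B : ℝ := q / (1 + k*c) with hB_def
  have hAB : A < B := div_lt_div_of_pos_left hq hdc (by nlinarith)
  have hA : 0 < A := by rw [hA_def]; positivity
  have hB : 0 < B := by rw [hB_def]; positivity
  -- LHS
  have hlhs1 : ∀ x ∈ Set.uIcc (0:ℝ) 1,
      (∫ y in A..B, 1/(1+k*(x+y))^2)
        = 1/(k*(1+k*(x+A))) - 1/(k*(1+k*(x+B))) := by
    intro x hx
    apply inner_int k x A B hk
    intro y hy
    rw [Set.uIcc_of_le hAB.le] at hy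
    rw [Set.uIcc_of_le zero_le_one] at hx
    nlinarith [hx.1, hy.1, hA, mul_pos hk (show (0:ℝ) < x + y by linarith [hx.1, hy.1, hA.trans_le hy.1])]
  have hposall : ∀ (s a b : ℝ), 0 < s → 0 ≤ a → 0 ≤ b →
      ∀ x ∈ Set.uIcc a b, 0 < 1 + k*(x+s) := by
    intro s a b hs ha hb x hx
    have hx0 : 0 ≤ x := by
      rcases le_total a b with h|h
      · rw [Set.uIcc_of_le h] at hx; linarith [hx.1]
      · rw [Set.uIcc_of_ge h] at hx; linarith [hx.1]
    nlinarith [mul_pos hk (show (0:ℝ) < x + s by linarith)]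
  have hint : ∀ (s a b : ℝ), 0 < s → 0 ≤ a → 0 ≤ b →
      IntervalIntegrable (fun x => 1/(k*(1+k*(x+s)))) MeasureTheory.volume a b := by
    intro s a b hs ha hb
    apply ContinuousOn.intervalIntegrable
    apply ContinuousOn.div continuousOn_const
    · fun_prop
    · intro x hx
      exact ne_of_gt (mul_pos hk (hposall s a b hs ha hb x hx))
  have hrhs1 : ∀ x ∈ Set.uIcc p q,
      (∫ y in c..d, 1/(1+k*(x+y))^2)
        = 1/(k*(1+k*(x+c))) - 1/(k*(1+k*(x+d))) := by
    intro x hx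
    apply inner_int k x c d hk
    intro y hy
    rw [Set.uIcc_of_le hcd.le] at hy
    have hpq' : p ≤ q := by rw [hpq]; rw [div_le_iff₀ hmpos]; nlinarith
    rw [Set.uIcc_of_le hpq'] at hx
    nlinarith [hx.1, hy.1, mul_pos hk (show (0:ℝ) < x + y by nlinarith [hx.1, hy.1])]
  rw [intervalIntegral.integral_congr hlhs1, intervalIntegral.integral_congr hrhs1,
    intervalIntegral.integral_sub (hint A 0 1 hA le_rfl zero_le_one)
      (hint B 0 1 hB le_rfl zero_le_one),
    intervalIntegral.integral_sub (hint c p q hc hp.le hq.le)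
      (hint d p q (hc.trans hcd) hp.le hq.le),
    log_int k A 0 1 hk (hposall A 0 1 hA le_rfl zero_le_one),
    log_int k B 0 1 hk (hposall B 0 1 hB le_rfl zero_le_one),
    log_int k c p q hk (hposall c p q hc hp.le hq.le),
    log_int k d p q hk (hposall d p q (hc.trans hcd) hp.le hq.le)]
  have hm_eq : (m:ℝ) = k + 1 := by rw [hk_def]; ring
  have e1 : 1+k*((1:ℝ)+A) = ((m:ℝ)*(1+k*(p+d)))/(1+k*d) := by
    rw [hA_def, hpq]; field_simp; nlinarith [hm_eq]
  have e2 : 1+k*((0:ℝ)+A) = (1+k*(q+d))/(1+k*d) := by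
    rw [hA_def]; field_simp; ring
  have e3 : 1+k*((1:ℝ)+B) = ((m:ℝ)*(1+k*(p+c)))/(1+k*c) := by
    rw [hB_def, hpq]; field_simp; nlinarith [hm_eq]
  have e4 : 1+k*((0:ℝ)+B) = (1+k*(q+c))/(1+k*c) := by
    rw [hB_def]; field_simp; ring
  have hpd : 0 < 1+k*(p+d) := by nlinarith [mul_pos hk (show (0:ℝ) < p + d by linarith)]
  have hpc : 0 < 1+k*(p+c) := by nlinarith [mul_pos hk (show (0:ℝ) < p + c by linarith)]
  have hqd : 0 < 1+k*(q+d) := by nlinarith [mul_pos hk (show (0:ℝ) < q + d by linarith)]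
  have hqc : 0 < 1+k*(q+c) := by nlinarith [mul_pos hk (show (0:ℝ) < q + c by linarith)]
  rw [e1, e2, e3, e4, Real.log_div (by positivity) (ne_of_gt hdd),
    Real.log_div (ne_of_gt hqd) (ne_of_gt hdd),
    Real.log_div (by positivity) (ne_of_gt hdc),
    Real.log_div (ne_of_gt hqc) (ne_of_gt hdc),
    Real.log_mul (ne_of_gt hmpos) (ne_of_gt hpd),
    Real.log_mul (ne_of_gt hmpos) (ne_of_gt hpc)]
  ring
end

section
/- For any integer m ≥ 2 and every x ∈ [0,1], the weights P_i(x) = (m−1)m^{−(i+1)}(x+1)(x+m) / ((x+(m−1)m^{−i}+1)(x+(m−1)m^{−(i+1)}+1)), i ∈ ℕ, are nonnegative and sum to 1: ∑_{i=0}^∞ P_i(x) = 1. -/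
/-- The weights `P_i(x)` of the Chan continued fraction. -/
noncomputable def chanP (m : ℕ) (i : ℕ) (x : ℝ) : ℝ :=
  ((m:ℝ) - 1) * (m:ℝ)^(-((i:ℤ)+1)) * (x + 1) * (x + m) /
    ((x + ((m:ℝ) - 1) * (m:ℝ)^(-(i:ℤ)) + 1) * (x + ((m:ℝ) - 1) * (m:ℝ)^(-((i:ℤ)+1)) + 1))

theorem chan_P_transition_probability (m : ℕ) (hm : 2 ≤ m) (x : ℝ)
    (hx : x ∈ Set.Icc (0:ℝ) 1) :
    (∀ i : ℕ, 0 ≤ chanP m i x) ∧ ∑' i : ℕ, chanP m i x = 1 := by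
  obtain ⟨hx0, hx1⟩ := hx
  have hM : (2:ℝ) ≤ (m:ℝ) := by exact_mod_cast hm
  have hM1 : (1:ℝ) < (m:ℝ) := by linarith
  have hM0 : (0:ℝ) < (m:ℝ) := by linarith
  have hMne : (m:ℝ) ≠ 0 := ne_of_gt hM0
  set M : ℝ := (m:ℝ) with hMdef
  have hc : ∀ i : ℕ, 0 < (M - 1) * M ^ (-(i:ℤ)) := fun i =>
    mul_pos (by linarith) (zpow_pos hM0 _)
  have ha : ∀ i : ℕ, 0 < x + (M - 1) * M ^ (-(i:ℤ)) + 1 := fun i => by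
    have := hc i; linarith
  have ha' : ∀ i : ℕ, 0 < x + (M - 1) * M ^ (-((i:ℤ)+1)) + 1 := fun i => by
    have h := ha (i+1)
    have hcst : ((i+1 : ℕ) : ℤ) = (i:ℤ) + 1 := by push_cast; ring
    rwa [hcst] at h
  have hnonneg : ∀ i : ℕ, 0 ≤ chanP m i x := by
    intro i
    unfold chanP
    apply div_nonneg
    · have h1 : 0 < M ^ (-((i:ℤ)+1)) := zpow_pos hM0 _
      have h2 : (0:ℝ) ≤ M - 1 := by linarith
      have h3 : (0:ℝ) ≤ x + M := by linarith
      positivity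
    · exact le_of_lt (mul_pos (ha i) (ha' i))
  refine ⟨hnonneg, ?_⟩
  set h : ℕ → ℝ := fun i => (x + 1) * (x + M) / ((M - 1) * (x + (M - 1) * M ^ (-(i:ℤ)) + 1))
    with hhdef
  have hkey : ∀ i : ℕ, chanP m i x = h (i+1) - h i := by
    intro i
    unfold chanP
    rw [← hMdef]
    rw [hhdef]
    simp only
    have hcast : ((i+1 : ℕ) : ℤ) = (i:ℤ) + 1 := by push_cast; ring
    rw [hcast]
    have hzp : M ^ (-(i:ℤ)) = M * M ^ (-((i:ℤ)+1)) := by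
      rw [neg_add, zpow_add₀ hMne, zpow_neg_one]
      field_simp
    rw [hzp]
    have hd1 : x + (M - 1) * (M * M ^ (-((i:ℤ)+1))) + 1 ≠ 0 := by
      have := ha i; rw [hzp] at this; exact this.ne'
    have hd2 : x + (M - 1) * M ^ (-((i:ℤ)+1)) + 1 ≠ 0 := (ha' i).ne'
    have hd3 : M - 1 ≠ 0 := by intro hcon; rw [sub_eq_zero] at hcon; linarith [hcon ▸ hM1]
    generalize hgt : M ^ (-((i:ℤ)+1)) = t at hd1 hd2 ⊢
    rw [div_sub_div _ _ (mul_ne_zero hd3 hd2) (mul_ne_zero hd3 hd1), div_eq_div_iff (mul_ne_zero hd1 hd2) (mul_ne_zero (mul_ne_zero hd3 hd2) (mul_ne_zero hd3 hd1))]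
    ring
  have hsum : ∀ n : ℕ, ∑ i ∈ Finset.range n, chanP m i x = h n - h 0 := by
    intro n
    calc ∑ i ∈ Finset.range n, chanP m i x = ∑ i ∈ Finset.range n, (h (i+1) - h i) :=
          Finset.sum_congr rfl fun i _ => hkey i
      _ = h n - h 0 := Finset.sum_range_sub h n
  have hpow : Filter.Tendsto (fun i : ℕ => M ^ (-(i:ℤ))) Filter.atTop (nhds 0) := by
    have heq : (fun i : ℕ => M ^ (-(i:ℤ))) = fun i : ℕ => (M⁻¹) ^ i := by
      funext i
      rw [zpow_neg, inv_pow, ← zpow_natCast]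
    rw [heq]
    exact tendsto_pow_atTop_nhds_zero_of_lt_one (by positivity)
      (by rw [inv_lt_one_iff₀]; right; exact hM1)
  have hden : (0:ℝ) < (M - 1) * (x + 0 + 1) := mul_pos (by linarith) (by linarith)
  have hlim : Filter.Tendsto h Filter.atTop
      (nhds ((x + 1) * (x + M) / ((M - 1) * (x + 0 + 1)))) := by
    apply Filter.Tendsto.div tendsto_const_nhds _ hden.ne'
    apply Filter.Tendsto.const_mul
    refine Filter.Tendsto.add (Filter.Tendsto.const_add x ?_) tendsto_const_nhds
    have := Filter.Tendsto.const_mul (M - 1) hpow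
    simpa using this
  have hL : (x + 1) * (x + M) / ((M - 1) * (x + 0 + 1)) - h 0 = 1 := by
    rw [hhdef]
    simp only
    have h0 : M ^ (-(0:ℕ):ℤ) = 1 := by norm_num
    rw [h0]
    have h1 : (0:ℝ) < M - 1 := by linarith
    have h2 : (0:ℝ) < x + 1 := by linarith
    have h3 : (0:ℝ) < x + (M - 1) * 1 + 1 := by linarith
    field_simp
    ring
  have hHS : HasSum (fun i => chanP m i x) 1 := by
    rw [hasSum_iff_tendsto_nat_of_nonneg hnonneg]
    have : Filter.Tendsto (fun n => h n - h 0) Filter.atTop (nhds 1) := by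
      rw [← hL]
      exact Filter.Tendsto.sub_const hlim _
    simpa only [hsum] using this
  exact hHS.tsum_eq
end

section
/- For any integer m ≥ 2, the Perron–Frobenius operator identity holds: for every f integrable with respect to γ_m and every Borel set A ⊆ [0,1], ∫_{T_m^{−1}(A)} f dγ_m = ∫_A ∑_{i∈ℕ} P_i((m−1)y) f(m^{−i}/(1+(m−1)y)) dγ_m(y). -/
open MeasureTheory

/-- The invariant measure `γ_m` of `T_m`. -/
noncomputable def chanGamma (m : ℕ) : Measure ℝ :=
  (volume.restrict (Set.Icc (0:ℝ) 1)).withDensity fun x =>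
    ENNReal.ofReal ((((m:ℝ) - 1)^2 / Real.log ((m:ℝ)^2 / (2*(m:ℝ) - 1))) /
      ((1 + ((m:ℝ) - 1) * x) * ((m:ℝ) + ((m:ℝ) - 1) * x)))

open scoped NNReal ENNReal

namespace ChanAux

noncomputable def rho (m : ℕ) (x : ℝ) : ℝ :=
  (((m:ℝ) - 1)^2 / Real.log ((m:ℝ)^2 / (2*(m:ℝ) - 1))) /
      ((1 + ((m:ℝ) - 1) * x) * ((m:ℝ) + ((m:ℝ) - 1) * x))

noncomputable def phi (m : ℕ) (i : ℕ) (y : ℝ) : ℝ :=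
  (m:ℝ)^(-(i:ℤ)) / (1 + ((m:ℝ) - 1) * y)

noncomputable def B (m : ℕ) (i : ℕ) : Set ℝ :=
  Set.Ioc ((m:ℝ)^(-(i:ℤ)-1)) ((m:ℝ)^(-(i:ℤ)))

section Facts

variable {m : ℕ} (hm : 2 ≤ m)

include hm

lemma hM2 : (2:ℝ) ≤ (m:ℝ) := by exact_mod_cast hm
lemma hM1 : (1:ℝ) < (m:ℝ) := by have := hM2 hm; linarith
lemma hM0 : (0:ℝ) < (m:ℝ) := by have := hM2 hm; linarith
lemma hMne : ((m:ℝ)) ≠ 0 := ne_of_gt (hM0 hm)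
lemma hr0 : (0:ℝ) < (m:ℝ) - 1 := by have := hM2 hm; linarith
lemma hlog : (0:ℝ) < Real.log m := Real.log_pos (hM1 hm)

lemma hu_pos {y : ℝ} (hy : 0 ≤ y) : (0:ℝ) < 1 + ((m:ℝ) - 1) * y := by
  have h := mul_nonneg (le_of_lt (hr0 hm)) hy; linarith

lemma rho_pos {x : ℝ} (hx : 0 ≤ x) : 0 < rho m x := by
  have hM := hM2 hm
  have hc : (0:ℝ) < (((m:ℝ) - 1)^2 / Real.log ((m:ℝ)^2 / (2*(m:ℝ) - 1))) := by
    apply div_pos (by nlinarith)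
    apply Real.log_pos
    rw [lt_div_iff₀ (by linarith)]
    nlinarith
  have h1 := hu_pos hm hx
  have h2 : (0:ℝ) < (m:ℝ) + ((m:ℝ)-1)*x := by nlinarith
  exact div_pos hc (mul_pos h1 h2)

omit hm in
lemma measurable_rho : Measurable (rho m) := by
  unfold rho
  fun_prop

lemma measurable_chanT : Measurable (chanT m) := by
  unfold chanT
  refine Measurable.ite (MeasurableSet.singleton 0) measurable_const ?_
  have hg : Measurable fun x : ℝ => Int.fract (Real.log (1/x) / Real.log m) := by
    apply measurable_fract.comp
    exact (Real.measurable_log.comp (measurable_const.div measurable_id)).div_const _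
  have hpow : Measurable fun x : ℝ => (m:ℝ) ^ (Int.fract (Real.log (1/x) / Real.log m)) := by
    have heq : (fun x : ℝ => (m:ℝ) ^ (Int.fract (Real.log (1/x) / Real.log m)))
        = fun x => Real.exp (Real.log m * Int.fract (Real.log (1/x) / Real.log m)) :=
      funext fun x => Real.rpow_def_of_pos (hM0 hm) _
    rw [heq]
    exact Real.measurable_exp.comp (hg.const_mul _)
  exact (hpow.sub measurable_const).div_const _

lemma rpow_log {x : ℝ} (hx : 0 < x) : (m:ℝ) ^ (Real.log (1/x) / Real.log m) = 1/x := by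
  rw [Real.rpow_def_of_pos (hM0 hm), mul_comm, div_mul_cancel₀ _ (ne_of_gt (hlog hm)),
    Real.exp_log (by positivity)]

lemma log_bounds (i : ℕ) {x : ℝ} (hx : x ∈ B m i) :
    (i:ℝ) ≤ Real.log (1/x) / Real.log m ∧ Real.log (1/x) / Real.log m < (i:ℝ) + 1 := by
  obtain ⟨hx1, hx2⟩ := hx
  have hb : (0:ℝ) < (m:ℝ)^(-(i:ℤ)-1) := zpow_pos (hM0 hm) _
  have hx0 : 0 < x := lt_trans hb hx1
  have hlx : Real.log (1/x) = - Real.log x := by rw [one_div, Real.log_inv]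
  have hlog' := hlog hm
  constructor
  · have h2' := Real.log_le_log hx0 hx2
    rw [Real.log_zpow] at h2'
    push_cast at h2'
    rw [le_div_iff₀ hlog', hlx]; linarith
  · have h1' : (-(i:ℝ) - 1) * Real.log m < Real.log x := by
      have := Real.log_lt_log hb hx1
      rw [Real.log_zpow] at this
      push_cast at this
      linarith
    rw [div_lt_iff₀ hlog', hlx]; linarith

lemma mem_B_of (i : ℕ) {x : ℝ} (hx0 : 0 < x)
    (h1 : (i:ℝ) ≤ Real.log (1/x) / Real.log m)
    (h2 : Real.log (1/x) / Real.log m < (i:ℝ) + 1) : x ∈ B m i := by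
  have hlx : Real.log (1/x) = - Real.log x := by rw [one_div, Real.log_inv]
  have hlog' := hlog hm
  rw [le_div_iff₀ hlog'] at h1
  rw [div_lt_iff₀ hlog'] at h2
  constructor
  · rw [← Real.log_lt_log_iff (zpow_pos (hM0 hm) _) hx0, Real.log_zpow]
    push_cast
    linarith
  · rw [← Real.log_le_log_iff hx0 (zpow_pos (hM0 hm) _), Real.log_zpow]
    push_cast
    linarith

lemma chanT_on_branch (i : ℕ) {x : ℝ} (hx : x ∈ B m i) :
    chanT m x = ((m:ℝ)^(-(i:ℤ))/x - 1) / ((m:ℝ) - 1) := by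
  have hb : (0:ℝ) < (m:ℝ)^(-(i:ℤ)-1) := zpow_pos (hM0 hm) _
  have hx0 : 0 < x := lt_trans hb hx.1
  obtain ⟨h1, h2⟩ := log_bounds hm i hx
  have hfl : ⌊Real.log (1/x) / Real.log m⌋ = (i:ℤ) :=
    Int.floor_eq_iff.2 ⟨by exact_mod_cast h1, by push_cast; exact h2⟩
  rw [chanT, if_neg (ne_of_gt hx0)]
  congr 1
  rw [Int.fract, hfl, Real.rpow_sub (hM0 hm), rpow_log hm hx0, Real.rpow_intCast]
  rw [zpow_neg]
  ring

lemma phi_mem (i : ℕ) {y : ℝ} (hy : y ∈ Set.Ico (0:ℝ) 1) : phi m i y ∈ B m i := by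
  obtain ⟨hy0, hy1⟩ := hy
  have hM := hM2 hm
  have ha : (0:ℝ) < (m:ℝ)^(-(i:ℤ)) := zpow_pos (hM0 hm) _
  have hu : (1:ℝ) ≤ 1 + ((m:ℝ)-1)*y := by nlinarith
  have hu2 : 1 + ((m:ℝ)-1)*y < (m:ℝ) := by nlinarith
  constructor
  · rw [phi]
    have h : (m:ℝ)^(-(i:ℤ)-1) = (m:ℝ)^(-(i:ℤ)) / m := by
      rw [zpow_sub₀ (hMne hm), zpow_one]
    rw [h]
    apply div_lt_div_of_pos_left ha (by linarith) hu2
  · rw [phi]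
    calc (m:ℝ)^(-(i:ℤ)) / (1 + ((m:ℝ)-1)*y) ≤ (m:ℝ)^(-(i:ℤ)) / 1 :=
        div_le_div_of_nonneg_left ha.le (by linarith) hu
    _ = (m:ℝ)^(-(i:ℤ)) := by ring

lemma chanT_phi (i : ℕ) {y : ℝ} (hy : y ∈ Set.Ico (0:ℝ) 1) : chanT m (phi m i y) = y := by
  rw [chanT_on_branch hm i (phi_mem hm i hy)]
  have ha : (0:ℝ) < (m:ℝ)^(-(i:ℤ)) := zpow_pos (hM0 hm) _
  have hu : (0:ℝ) < 1 + ((m:ℝ)-1)*y := hu_pos hm hy.1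
  have hphi : (m:ℝ)^(-(i:ℤ)) / (phi m i y) = 1 + ((m:ℝ)-1)*y := by
    rw [phi]; field_simp
  rw [hphi, add_sub_cancel_left, mul_comm, mul_div_assoc, div_self (ne_of_gt (hr0 hm)),
    mul_one]

lemma image_eq {A : Set ℝ} (i : ℕ) :
    phi m i '' (A ∩ Set.Ico 0 1) = B m i ∩ chanT m ⁻¹' A := by
  ext x
  constructor
  · rintro ⟨y, ⟨hyA, hy⟩, rfl⟩
    exact ⟨phi_mem hm i hy, by rw [Set.mem_preimage, chanT_phi hm i hy]; exact hyA⟩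
  · rintro ⟨hxB, hxA⟩
    have hb : (0:ℝ) < (m:ℝ)^(-(i:ℤ)-1) := zpow_pos (hM0 hm) _
    have hx0 : 0 < x := lt_trans hb hxB.1
    have ha : (0:ℝ) < (m:ℝ)^(-(i:ℤ)) := zpow_pos (hM0 hm) _
    have hab : (m:ℝ)^(-(i:ℤ)-1) * m = (m:ℝ)^(-(i:ℤ)) := by
      rw [zpow_sub₀ (hMne hm), zpow_one]
      field_simp
    set y := chanT m x with hy
    have hTx : chanT m x = ((m:ℝ)^(-(i:ℤ))/x - 1) / ((m:ℝ) - 1) := chanT_on_branch hm i hxB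
    have hy0 : 0 ≤ y := by
      rw [hy, hTx]
      apply div_nonneg _ (hr0 hm).le
      have : (1:ℝ) ≤ (m:ℝ)^(-(i:ℤ))/x := (le_div_iff₀ hx0).2 (by linarith [hxB.2])
      linarith
    have hy1 : y < 1 := by
      rw [hy, hTx, div_lt_one (hr0 hm)]
      have hlt : (m:ℝ)^(-(i:ℤ))/x < (m:ℝ) := by
        rw [div_lt_iff₀ hx0]
        have h2 := mul_lt_mul_of_pos_right hxB.1 (hM0 hm)
        rw [hab] at h2
        linarith
      linarith
    refine ⟨y, ⟨hxA, hy0, hy1⟩, ?_⟩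
    have hden : 1 + ((m:ℝ)-1) * ((((m:ℝ)^(-(i:ℤ))/x - 1))/((m:ℝ)-1)) = (m:ℝ)^(-(i:ℤ))/x := by
      field_simp [(hr0 hm).ne']
      ring
    rw [phi, hy, hTx, hden, div_div_eq_mul_div, mul_comm, mul_div_assoc,
      div_self ha.ne', mul_one]

lemma B_union : ⋃ i, B m i = Set.Ioc (0:ℝ) 1 := by
  apply Set.Subset.antisymm
  · apply Set.iUnion_subset
    intro i x hx
    have hb : (0:ℝ) < (m:ℝ)^(-(i:ℤ)-1) := zpow_pos (hM0 hm) _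
    refine ⟨lt_trans hb hx.1, le_trans hx.2 ?_⟩
    apply zpow_le_one_of_nonpos₀ (hM1 hm).le
    omega
  · intro x hx
    have hx0 : 0 < x := hx.1
    set t := Real.log (1/x) / Real.log m with ht
    have ht0 : 0 ≤ t := by
      apply div_nonneg _ (hlog hm).le
      apply Real.log_nonneg
      rw [le_div_iff₀ hx0]; linarith [hx.2]
    have hfl : ((⌊t⌋.toNat : ℤ) : ℝ) = ((⌊t⌋ : ℤ) : ℝ) := by
      rw [Int.toNat_of_nonneg (Int.floor_nonneg.2 ht0)]
    refine Set.mem_iUnion.2 ⟨⌊t⌋.toNat, mem_B_of hm _ hx0 ?_ ?_⟩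
    · push_cast at hfl ⊢
      rw [hfl]
      exact Int.floor_le t
    · push_cast at hfl ⊢
      rw [hfl]
      linarith [Int.lt_floor_add_one t]

lemma B_disjoint : Pairwise (Function.onFun Disjoint (B m)) := by
  have key : ∀ i j : ℕ, i < j → Disjoint (B m i) (B m j) := by
    intro i j hij
    rw [Set.disjoint_left]
    intro x hxi hxj
    have h1 : (m:ℝ)^(-(j:ℤ)) ≤ (m:ℝ)^(-(i:ℤ)-1) :=
      zpow_le_zpow_right₀ (hM1 hm).le (by omega)
    linarith [hxi.1, hxj.2]
  intro i j hij
  rcases hij.lt_or_gt with h | h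
  · exact key i j h
  · exact (key j i h).symm

lemma hasDerivAt_phi (i : ℕ) {y : ℝ} (hy : 0 ≤ y) :
    HasDerivAt (phi m i) (-((m:ℝ)^(-(i:ℤ)) * ((m:ℝ)-1)) / (1 + ((m:ℝ)-1)*y)^2) y := by
  have hu : (0:ℝ) < 1 + ((m:ℝ)-1)*y := hu_pos hm hy
  have h1 : HasDerivAt (fun y : ℝ => 1 + ((m:ℝ)-1)*y) ((m:ℝ)-1) y := by
    simpa using ((hasDerivAt_id y).const_mul ((m:ℝ)-1)).const_add 1
  have h2 := (hasDerivAt_const y ((m:ℝ)^(-(i:ℤ)))).div h1 hu.ne'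
  refine (show HasDerivAt (phi m i) _ y from h2).congr_deriv ?_
  ring

lemma injOn_phi (i : ℕ) : Set.InjOn (phi m i) {y | 0 ≤ y} := by
  intro y1 h1 y2 h2 heq
  have h1' : (0:ℝ) ≤ y1 := h1
  have h2' : (0:ℝ) ≤ y2 := h2
  have ha : (0:ℝ) < (m:ℝ)^(-(i:ℤ)) := zpow_pos (hM0 hm) _
  have hu1 : (0:ℝ) < 1 + ((m:ℝ)-1)*y1 := hu_pos hm h1'
  have hu2 : (0:ℝ) < 1 + ((m:ℝ)-1)*y2 := hu_pos hm h2'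
  rw [phi, phi, div_eq_div_iff hu1.ne' hu2.ne'] at heq
  have hr := hr0 hm
  have heq2 : (1 + ((m:ℝ)-1)*y2) = (1 + ((m:ℝ)-1)*y1) := mul_left_cancel₀ ha.ne' heq
  nlinarith

lemma chanP_nonneg (i : ℕ) {y : ℝ} (hy : 0 ≤ y) :
    0 ≤ chanP m i (((m:ℝ)-1)*y) := by
  have hM := hM2 hm
  have ha : (0:ℝ) < (m:ℝ)^(-(i:ℤ)) := zpow_pos (hM0 hm) _
  have hb : (0:ℝ) < (m:ℝ)^(-((i:ℤ)+1)) := zpow_pos (hM0 hm) _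
  rw [chanP]
  apply div_nonneg
  · have : (0:ℝ) ≤ ((m:ℝ)-1)*y := by nlinarith
    apply mul_nonneg; apply mul_nonneg; apply mul_nonneg
    all_goals nlinarith
  · have h1 : (0:ℝ) < ((m:ℝ)-1)*y + ((m:ℝ)-1)*(m:ℝ)^(-(i:ℤ)) + 1 := by nlinarith
    have h2 : (0:ℝ) < ((m:ℝ)-1)*y + ((m:ℝ)-1)*(m:ℝ)^(-((i:ℤ)+1)) + 1 := by nlinarith
    positivity

set_option maxHeartbeats 1000000 in
lemma key_density (i : ℕ) {y : ℝ} (hy : 0 ≤ y) :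
    |(-((m:ℝ)^(-(i:ℤ)) * ((m:ℝ)-1)) / (1 + ((m:ℝ)-1)*y)^2)| * rho m (phi m i y)
      = rho m y * chanP m i (((m:ℝ)-1)*y) := by
  have hM := hM2 hm
  have hb : (0:ℝ) < (m:ℝ)^(-((i:ℤ)+1)) := zpow_pos (hM0 hm) _
  have ha : (0:ℝ) < (m:ℝ)^(-(i:ℤ)) := zpow_pos (hM0 hm) _
  have hab : (m:ℝ)^(-(i:ℤ)) = (m:ℝ) * (m:ℝ)^(-((i:ℤ)+1)) := by
    have he : -(i:ℤ) = -((i:ℤ)+1)+1 := by ring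
    rw [he, zpow_add_one₀ (hMne hm)]
    ring
  have hu : (0:ℝ) < 1 + ((m:ℝ)-1)*y := hu_pos hm hy
  have habs : |(-((m:ℝ)^(-(i:ℤ)) * ((m:ℝ)-1)) / (1 + ((m:ℝ)-1)*y)^2)|
      = ((m:ℝ)^(-(i:ℤ)) * ((m:ℝ)-1)) / (1 + ((m:ℝ)-1)*y)^2 := by
    rw [abs_div, abs_neg, abs_of_pos (by nlinarith), abs_of_pos (by positivity)]
  rw [habs]
  unfold rho phi chanP
  rw [hab]
  generalize hc : (((m:ℝ) - 1)^2 / Real.log ((m:ℝ)^2 / (2*(m:ℝ) - 1))) = c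
  generalize hq : (m:ℝ)^(-((i:ℤ)+1)) = b at hb ⊢
  have hy' : (0:ℝ) ≤ ((m:ℝ)-1)*y := mul_nonneg (by linarith) hy
  have hbM : (0:ℝ) < ((m:ℝ)-1)*((m:ℝ)*b) :=
    mul_pos (by linarith) (mul_pos (by linarith) hb)
  have e1 : 1 + ((m:ℝ)-1) * ((m:ℝ) * b / (1 + ((m:ℝ)-1)*y))
      = ((1 + ((m:ℝ)-1)*y) + ((m:ℝ)-1)*((m:ℝ)*b)) / (1 + ((m:ℝ)-1)*y) := by
    field_simp
  have e2 : (m:ℝ) + ((m:ℝ)-1) * ((m:ℝ) * b / (1 + ((m:ℝ)-1)*y))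
      = ((m:ℝ)*(1 + ((m:ℝ)-1)*y) + ((m:ℝ)-1)*((m:ℝ)*b)) / (1 + ((m:ℝ)-1)*y) := by
    field_simp
  rw [e1, e2]
  have hA : (0:ℝ) < (1 + ((m:ℝ)-1)*y) + ((m:ℝ)-1)*((m:ℝ)*b) := by linarith
  have hB : (0:ℝ) < (m:ℝ)*(1 + ((m:ℝ)-1)*y) + ((m:ℝ)-1)*((m:ℝ)*b) := by nlinarith
  have h3 : (0:ℝ) < ((m:ℝ)-1)*y + ((m:ℝ)-1)*((m:ℝ)*b) + 1 := by linarith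
  have h4 : (0:ℝ) < ((m:ℝ)-1)*y + ((m:ℝ)-1)*b + 1 := by
    nlinarith [mul_pos (show (0:ℝ) < (m:ℝ)-1 by linarith) hb]
  have h5 : (0:ℝ) < (m:ℝ) + ((m:ℝ)-1)*y := by linarith
  field_simp [hu.ne', hA.ne', hB.ne', h3.ne', h4.ne', h5.ne']
  ring

omit hm in
lemma measurable_phi (i : ℕ) : Measurable (phi m i) := by
  unfold phi
  fun_prop

omit hm in
lemma measurable_chanP_comp (i : ℕ) : Measurable fun y : ℝ => chanP m i (((m:ℝ)-1)*y) := by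
  unfold chanP
  fun_prop

lemma B_subset (i : ℕ) : B m i ⊆ Set.Ioc (0:ℝ) 1 := by
  rw [← B_union hm]
  exact Set.subset_iUnion _ i

lemma rho_lower {x : ℝ} (hx : x ∈ Set.Icc (0:ℝ) 1) : rho m 1 ≤ rho m x := by
  have hM := hM2 hm
  obtain ⟨hx0, hx1⟩ := hx
  have hc : (0:ℝ) < (((m:ℝ) - 1)^2 / Real.log ((m:ℝ)^2 / (2*(m:ℝ) - 1))) := by
    apply div_pos (by nlinarith)
    apply Real.log_pos
    rw [lt_div_iff₀ (by linarith)]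
    nlinarith
  have h1 : (0:ℝ) < 1 + ((m:ℝ)-1)*x := hu_pos hm hx0
  have h2 : (0:ℝ) < (m:ℝ) + ((m:ℝ)-1)*x := by linarith
  apply div_le_div_of_nonneg_left hc.le (mul_pos h1 h2)
  nlinarith [mul_nonneg (mul_nonneg (show (0:ℝ) ≤ (m:ℝ)-1 by linarith) (sub_nonneg.2 hx1))
    (show (0:ℝ) ≤ (m:ℝ)+1+((m:ℝ)-1)*x+((m:ℝ)-1) by nlinarith)]

/-- Reduction of `chanGamma`-set-integrals to Lebesgue integrals. -/
lemma setIntegral_gamma {S : Set ℝ} (hS : MeasurableSet S) (g : ℝ → ℝ) :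
    ∫ x in S, g x ∂(chanGamma m) = ∫ x in S ∩ Set.Icc 0 1, rho m x * g x := by
  have hmeas : Measurable fun x : ℝ => Real.toNNReal (rho m x) :=
    measurable_rho.real_toNNReal
  have h1 : (chanGamma m).restrict S
      = (volume.restrict (S ∩ Set.Icc (0:ℝ) 1)).withDensity fun x =>
        ((Real.toNNReal (rho m x) : NNReal) : ENNReal) := by
    rw [chanGamma, restrict_withDensity hS, Measure.restrict_restrict hS]
    rfl
  rw [show (∫ x in S, g x ∂(chanGamma m)) = ∫ x, g x ∂((chanGamma m).restrict S) from rfl, h1,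
    integral_withDensity_eq_integral_smul hmeas g]
  apply setIntegral_congr_fun (hS.inter measurableSet_Icc)
  intro x hx
  have h2 : 0 ≤ rho m x := (rho_pos hm hx.2.1).le
  simp [NNReal.smul_def, Real.coe_toNNReal _ h2]

/-- Integrability transfer from `chanGamma` to Lebesgue. -/
lemma integrable_rho_mul {g : ℝ → ℝ} (hg : Integrable g (chanGamma m)) :
    IntegrableOn (fun x => rho m x * g x) (Set.Icc (0:ℝ) 1) volume := by
  have hmeas : Measurable fun x : ℝ => Real.toNNReal (rho m x) :=
    measurable_rho.real_toNNReal
  have h1 : chanGamma m = (volume.restrict (Set.Icc (0:ℝ) 1)).withDensity fun x =>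
      ((Real.toNNReal (rho m x) : NNReal) : ENNReal) := by
    rw [chanGamma]
    rfl
  rw [h1, integrable_withDensity_iff_integrable_smul hmeas] at hg
  apply hg.congr
  rw [Filter.eventuallyEq_iff_exists_mem]
  refine ⟨Set.Icc (0:ℝ) 1, ?_, fun x hx => ?_⟩
  · rw [mem_ae_iff]
    rw [Measure.restrict_apply (measurableSet_Icc.compl)]
    simp
  · have h2 : 0 ≤ rho m x := (rho_pos hm hx.1).le
    simp [NNReal.smul_def, Real.coe_toNNReal _ h2]

/-- Change of variables on a single branch. -/
lemma branch_integral {A : Set ℝ} (hA : MeasurableSet A) (i : ℕ) (g : ℝ → ℝ) :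
    ∫ x in B m i ∩ chanT m ⁻¹' A, rho m x * g x
      = ∫ y in A ∩ Set.Ico 0 1, rho m y *
          (chanP m i (((m:ℝ)-1)*y) * g (phi m i y)) := by
  have hs : MeasurableSet (A ∩ Set.Ico (0:ℝ) 1) := hA.inter measurableSet_Ico
  have hd : ∀ y ∈ A ∩ Set.Ico (0:ℝ) 1, HasDerivWithinAt (phi m i)
      (-((m:ℝ)^(-(i:ℤ)) * ((m:ℝ)-1)) / (1 + ((m:ℝ)-1)*y)^2) (A ∩ Set.Ico (0:ℝ) 1) y :=
    fun y hy => (hasDerivAt_phi hm i hy.2.1).hasDerivWithinAt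
  have hi : Set.InjOn (phi m i) (A ∩ Set.Ico (0:ℝ) 1) :=
    (injOn_phi hm i).mono (fun y hy => hy.2.1)
  rw [← image_eq hm i, integral_image_eq_integral_abs_deriv_smul hs hd hi]
  apply setIntegral_congr_fun hs
  intro y hy
  have h := key_density hm i hy.2.1
  simp only [smul_eq_mul]
  calc |(-((m:ℝ)^(-(i:ℤ)) * ((m:ℝ)-1)) / (1 + ((m:ℝ)-1)*y)^2)| *
        (rho m (phi m i y) * g (phi m i y))
      = (|(-((m:ℝ)^(-(i:ℤ)) * ((m:ℝ)-1)) / (1 + ((m:ℝ)-1)*y)^2)| *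
        rho m (phi m i y)) * g (phi m i y) := by ring
    _ = (rho m y * chanP m i (((m:ℝ)-1)*y)) * g (phi m i y) := by rw [h]
    _ = rho m y * (chanP m i (((m:ℝ)-1)*y) * g (phi m i y)) := by ring

/-- Integrability transfer on a single branch. -/
lemma branch_integrable {A : Set ℝ} (hA : MeasurableSet A) (i : ℕ) (g : ℝ → ℝ)
    (hg : IntegrableOn (fun x => rho m x * g x) (B m i ∩ chanT m ⁻¹' A) volume) :
    IntegrableOn (fun y => rho m y * (chanP m i (((m:ℝ)-1)*y) * g (phi m i y)))
      (A ∩ Set.Ico 0 1) volume := by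
  have hs : MeasurableSet (A ∩ Set.Ico (0:ℝ) 1) := hA.inter measurableSet_Ico
  have hd : ∀ y ∈ A ∩ Set.Ico (0:ℝ) 1, HasDerivWithinAt (phi m i)
      (-((m:ℝ)^(-(i:ℤ)) * ((m:ℝ)-1)) / (1 + ((m:ℝ)-1)*y)^2) (A ∩ Set.Ico (0:ℝ) 1) y :=
    fun y hy => (hasDerivAt_phi hm i hy.2.1).hasDerivWithinAt
  have hi : Set.InjOn (phi m i) (A ∩ Set.Ico (0:ℝ) 1) :=
    (injOn_phi hm i).mono (fun y hy => hy.2.1)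
  rw [← image_eq hm i,
    MeasureTheory.integrableOn_image_iff_integrableOn_abs_deriv_smul hs hd hi] at hg
  apply hg.congr_fun _ hs
  intro y hy
  have h := key_density hm i hy.2.1
  simp only [smul_eq_mul]
  calc |(-((m:ℝ)^(-(i:ℤ)) * ((m:ℝ)-1)) / (1 + ((m:ℝ)-1)*y)^2)| *
        (rho m (phi m i y) * g (phi m i y))
      = (|(-((m:ℝ)^(-(i:ℤ)) * ((m:ℝ)-1)) / (1 + ((m:ℝ)-1)*y)^2)| *
        rho m (phi m i y)) * g (phi m i y) := by ring
    _ = (rho m y * chanP m i (((m:ℝ)-1)*y)) * g (phi m i y) := by rw [h]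
    _ = rho m y * (chanP m i (((m:ℝ)-1)*y) * g (phi m i y)) := by ring

/-- Null sets of `chanGamma` meet `[0,1]` in Lebesgue-null sets. -/
lemma null_of_gamma_null {t : Set ℝ} (htm : MeasurableSet t) (ht : chanGamma m t = 0) :
    volume (t ∩ Set.Icc (0:ℝ) 1) = 0 := by
  have h1 : chanGamma m t = ∫⁻ x in t ∩ Set.Icc (0:ℝ) 1,
      ENNReal.ofReal ((((m:ℝ) - 1)^2 / Real.log ((m:ℝ)^2 / (2*(m:ℝ) - 1))) /
      ((1 + ((m:ℝ) - 1) * x) * ((m:ℝ) + ((m:ℝ) - 1) * x))) ∂volume := by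
    rw [chanGamma, withDensity_apply _ htm, Measure.restrict_restrict htm]
  have h2 : ENNReal.ofReal (rho m 1) * volume (t ∩ Set.Icc (0:ℝ) 1)
      ≤ chanGamma m t := by
    rw [h1, ← setLIntegral_const]
    apply setLIntegral_mono (measurable_rho.ennreal_ofReal)
    intro x hx
    exact ENNReal.ofReal_le_ofReal (rho_lower hm hx.2)
  rw [ht] at h2
  have h3 := le_antisymm h2 zero_le
  rcases mul_eq_zero.mp h3 with h | h
  · exact absurd h (by
      simp only [ne_eq, ENNReal.ofReal_eq_zero, not_le]
      exact rho_pos hm (by norm_num : (0:ℝ) ≤ 1))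
  · exact h

/-- a.e.-strong-measurability of `f ∘ phi`. -/
lemma aesm_comp_phi (i : ℕ) {f : ℝ → ℝ}
    (hf : AEStronglyMeasurable f (chanGamma m)) :
    AEStronglyMeasurable (fun y => f (phi m i y))
      (volume.restrict (Set.Ico (0:ℝ) 1)) := by
  obtain ⟨g, hg_sm, hfg⟩ := hf
  obtain ⟨t, hsub, htm, ht0⟩ := exists_measurable_superset_of_null (ae_iff.1 hfg)
  have hvol : volume (t ∩ Set.Icc (0:ℝ) 1) = 0 := null_of_gamma_null hm htm ht0
  -- the preimage of `t` under `phi i` inside `[0,1)` is null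
  have hpre : volume (phi m i ⁻¹' t ∩ Set.Ico (0:ℝ) 1) = 0 := by
    set psi : ℝ → ℝ := fun x => ((m:ℝ)^(-(i:ℤ))/x - 1) / ((m:ℝ) - 1) with hpsi
    have hsub2 : phi m i ⁻¹' t ∩ Set.Ico (0:ℝ) 1
        ⊆ psi '' (t ∩ Set.Icc (0:ℝ) 1 ∩ B m i) := by
      rintro y ⟨hyt, hy⟩
      refine ⟨phi m i y, ⟨⟨hyt, ?_⟩, phi_mem hm i hy⟩, ?_⟩
      · have := B_subset hm i (phi_mem hm i hy)
        exact ⟨this.1.le, this.2⟩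
      · have h1 := chanT_on_branch hm i (phi_mem hm i hy)
        have h2 := chanT_phi hm i hy
        simp only [hpsi]
        rw [← h1]
        exact h2
    apply measure_mono_null hsub2
    apply MeasureTheory.addHaar_image_eq_zero_of_differentiableOn_of_addHaar_eq_zero
      (μ := volume)
    · intro x hx
      have hx0 : 0 < x := (B_subset hm i hx.2).1
      exact (((differentiableAt_const _).div differentiableAt_id hx0.ne').sub
        (differentiableAt_const _)).div_const _ |>.differentiableWithinAt
    · exact measure_mono_null (fun x hx => hx.1) hvol
  have hgm : AEStronglyMeasurable (fun y => g (phi m i y))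
      (volume.restrict (Set.Ico (0:ℝ) 1)) :=
    (hg_sm.comp_measurable (measurable_phi i)).aestronglyMeasurable
  apply hgm.congr
  have ht' : (volume.restrict (Set.Ico (0:ℝ) 1)) (phi m i ⁻¹' t) = 0 := by
    rw [Measure.restrict_apply ((measurable_phi i) htm)]
    exact hpre
  apply ae_iff.2 (measure_mono_null ?_ ht')
  intro y hy
  simp only [Set.mem_setOf_eq] at hy
  apply hsub
  simp only [Set.mem_setOf_eq]
  intro hcon
  exact hy hcon.symm

end Facts

end ChanAux

open ChanAux in
theorem chan_perron_frobenius_identity (m : ℕ) (hm : 2 ≤ m) (f : ℝ → ℝ)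
    (hf : Integrable f (chanGamma m)) (A : Set ℝ) (hA : MeasurableSet A) :
    ∫ x in chanT m ⁻¹' A, f x ∂(chanGamma m) =
      ∫ y in A,
        (∑' i : ℕ, chanP m i (((m:ℝ) - 1) * y) * f ((m:ℝ)^(-(i:ℤ)) / (1 + ((m:ℝ) - 1) * y)))
        ∂(chanGamma m) := by
  show ∫ x in chanT m ⁻¹' A, f x ∂(chanGamma m) =
      ∫ y in A, (∑' i : ℕ, chanP m i (((m:ℝ) - 1) * y) * f (phi m i y)) ∂(chanGamma m)
  have hTmeas := measurable_chanT hm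
  have hSpre : MeasurableSet (chanT m ⁻¹' A) := hTmeas hA
  have hs : MeasurableSet (A ∩ Set.Ico (0:ℝ) 1) := hA.inter measurableSet_Ico
  set C : ℕ → Set ℝ := fun i => B m i ∩ chanT m ⁻¹' A with hC
  have hCm : ∀ i, MeasurableSet (C i) := fun i => measurableSet_Ioc.inter hSpre
  have hCd : Pairwise (Function.onFun Disjoint C) := fun i j hij =>
    ((B_disjoint hm) hij).mono Set.inter_subset_left Set.inter_subset_left
  have hCunion : ⋃ i, C i = chanT m ⁻¹' A ∩ Set.Ioc 0 1 := by
    ext x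
    simp only [hC, Set.mem_iUnion, Set.mem_inter_iff, Set.mem_preimage]
    constructor
    · rintro ⟨i, hB, hT⟩
      exact ⟨hT, B_subset hm i hB⟩
    · rintro ⟨hT, hx⟩
      have hx' : x ∈ ⋃ i, B m i := (B_union hm).symm ▸ hx
      obtain ⟨i, hB⟩ := Set.mem_iUnion.1 hx'
      exact ⟨i, hB, hT⟩
  have hsub : ⋃ i, C i ⊆ Set.Icc (0:ℝ) 1 := by
    rw [hCunion]; exact fun x hx => ⟨hx.2.1.le, hx.2.2⟩
  have hint : IntegrableOn (fun x => rho m x * f x) (⋃ i, C i) volume :=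
    (integrable_rho_mul hm hf).mono_set hsub
  have hintabs : IntegrableOn (fun x => rho m x * |f x|) (⋃ i, C i) volume :=
    (integrable_rho_mul hm hf.abs).mono_set hsub
  have hLHS : ∫ x in chanT m ⁻¹' A, f x ∂(chanGamma m)
      = ∑' i, ∫ y in A ∩ Set.Ico 0 1, rho m y *
          (chanP m i (((m:ℝ)-1)*y) * f (phi m i y)) := by
    rw [setIntegral_gamma hm hSpre f,
      setIntegral_congr_set (ae_eq_set_inter (Filter.EventuallyEq.refl _ (chanT m ⁻¹' A))
        (Ioc_ae_eq_Icc (a := (0:ℝ)) (b := 1) (μ := volume)).symm),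
      ← hCunion, integral_iUnion hCm hCd hint]
    exact tsum_congr fun i => branch_integral hm hA i f
  have hbint : ∀ i, IntegrableOn (fun y => rho m y *
      (chanP m i (((m:ℝ)-1)*y) * f (phi m i y))) (A ∩ Set.Ico 0 1) volume :=
    fun i => branch_integrable hm hA i f (hint.mono_set (Set.subset_iUnion C i))
  have hnonneg : ∀ i, 0 ≤ ∫ x in C i, rho m x * |f x| := fun i =>
    setIntegral_nonneg (hCm i) fun x hx =>
      mul_nonneg (rho_pos hm (B_subset hm i hx.1).1.le).le (abs_nonneg _)
  have hsummable : Summable (fun i => ∫ x in C i, rho m x * |f x|) :=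
    ⟨_, hasSum_integral_iUnion hCm hCd hintabs⟩
  have hRHS : ∫ y in A, (∑' i, chanP m i (((m:ℝ)-1)*y) * f (phi m i y)) ∂(chanGamma m)
      = ∫ y in A ∩ Set.Ico 0 1, ∑' i, rho m y *
          (chanP m i (((m:ℝ)-1)*y) * f (phi m i y)) := by
    rw [setIntegral_gamma hm hA,
      setIntegral_congr_set (ae_eq_set_inter (Filter.EventuallyEq.refl _ A)
        (Ico_ae_eq_Icc (a := (0:ℝ)) (b := 1) (μ := volume)).symm)]
    apply setIntegral_congr_fun hs
    intro y _
    exact tsum_mul_left.symm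
  have heq : ∀ i, (∫⁻ y in A ∩ Set.Ico 0 1,
        ‖rho m y * (chanP m i (((m:ℝ)-1)*y) * f (phi m i y))‖ₑ ∂volume)
      = ENNReal.ofReal (∫ x in C i, rho m x * |f x|) := by
    intro i
    rw [← ofReal_integral_norm_eq_lintegral_enorm (hbint i)]
    congr 1
    rw [show (∫ x in C i, rho m x * |f x|)
        = ∫ y in A ∩ Set.Ico 0 1, rho m y *
            (chanP m i (((m:ℝ)-1)*y) * |f (phi m i y)|) from
      branch_integral hm hA i (fun x => |f x|)]
    apply setIntegral_congr_fun hs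
    intro y hy
    simp only [Real.norm_eq_abs, abs_mul]
    rw [abs_of_nonneg (rho_pos hm hy.2.1).le, abs_of_nonneg (chanP_nonneg hm i hy.2.1)]
  have hswap : ∫ y in A ∩ Set.Ico 0 1, (∑' i, rho m y *
        (chanP m i (((m:ℝ)-1)*y) * f (phi m i y)))
      = ∑' i, ∫ y in A ∩ Set.Ico 0 1, rho m y *
          (chanP m i (((m:ℝ)-1)*y) * f (phi m i y)) := by
    apply integral_tsum (fun i => (hbint i).1)
    rw [tsum_congr heq, ← ENNReal.ofReal_tsum_of_nonneg hnonneg hsummable]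
    exact ENNReal.ofReal_ne_top
  rw [hLHS, hRHS, hswap]
end
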